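/- arXiv:2402.02179 — 2 statements merged into one kernel-verified Lean document; each statement's English description precedes it below -/
import Mathlib

section
/- Let Φ be an anisotropy on ℝⁿ, η⁺ ∈ ∂Φ(eₙ), 0 ≤ β < Φ(eₙ), and let Ψ_β(x) = Φ(x) − β⟨x, η⁺/Φ(eₙ)⟩ (an anisotropy). Then for any x ∈ ℝⁿ: Ψ_β°(x) = 1 if and only if Φ°(x + β·η⁺/Φ(eₙ)) = 1, where Ψ_β° and Φ° are the respective dual anisotropies. -/
open MeasureTheory Set
open scoped RealInnerProductSpace ENNReal NNReal Pointwise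

noncomputable section

/-- A positively one-homogeneous function. -/
def PosHomOne {n : ℕ} (f : EuclideanSpace ℝ (Fin (n+1)) → ℝ) : Prop :=
  ∀ (t : ℝ), 0 ≤ t → ∀ x, f (t • x) = t * f x

/-- An anisotropy on ℝ^{n+1}: convex, positively one-homogeneous and comparable
to the Euclidean norm with constants `0 < c ≤ C`. -/
def IsAnisotropy {n : ℕ} (Φ : EuclideanSpace ℝ (Fin (n+1)) → ℝ) (c C : ℝ) : Prop :=
  0 < c ∧ c ≤ C ∧ ConvexOn ℝ Set.univ Φ ∧ PosHomOne Φ ∧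
    ∀ x, c * ‖x‖ ≤ Φ x ∧ Φ x ≤ C * ‖x‖

/-- The dual anisotropy Φ°(x) = sup {⟨x,y⟩ : Φ(y) = 1}. -/
def dualAniso {n : ℕ} (Φ : EuclideanSpace ℝ (Fin (n+1)) → ℝ)
    (x : EuclideanSpace ℝ (Fin (n+1))) : ℝ :=
  sSup {r : ℝ | ∃ y, Φ y = 1 ∧ r = ⟪x, y⟫}

/-- The last coordinate vector e_n = (0,…,0,1). -/
def eLast (n : ℕ) : EuclideanSpace ℝ (Fin (n+1)) := EuclideanSpace.single (Fin.last n) 1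

/-- Subdifferential of a convex function. -/
def subdiff {n : ℕ} (f : EuclideanSpace ℝ (Fin (n+1)) → ℝ)
    (θ : EuclideanSpace ℝ (Fin (n+1))) : Set (EuclideanSpace ℝ (Fin (n+1))) :=
  {ζ | ∀ y, f θ + ⟪ζ, y - θ⟫ ≤ f y}

/-- The open upper half-space Ω = {x_n > 0}. -/
def upperHalf (n : ℕ) : Set (EuclideanSpace ℝ (Fin (n+1))) := {x | 0 < x (Fin.last n)}

/-- The hyperplane ∂Ω = {x_n = 0}. -/
def halfBoundary (n : ℕ) : Set (EuclideanSpace ℝ (Fin (n+1))) := {x | x (Fin.last n) = 0}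

/-- Divergence of a vector field. -/
def vdiv {n : ℕ} (T : EuclideanSpace ℝ (Fin (n+1)) → EuclideanSpace ℝ (Fin (n+1)))
    (x : EuclideanSpace ℝ (Fin (n+1))) : ℝ :=
  ∑ i, fderiv ℝ T x (EuclideanSpace.single i 1) i

/-- `RB` is the reduced boundary and `ν` the generalized outer unit normal of the
finite perimeter set `E`, expressed through the generalized Gauss–Green theorem. -/
structure IsReducedBoundary {n : ℕ} (E RB : Set (EuclideanSpace ℝ (Fin (n+1))))
    (ν : EuclideanSpace ℝ (Fin (n+1)) → EuclideanSpace ℝ (Fin (n+1))) : Prop where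
  unit : ∀ x ∈ RB, ‖ν x‖ = 1
  finite : μH[(n : ℝ)] RB ≠ ⊤
  gaussGreen : ∀ T : EuclideanSpace ℝ (Fin (n+1)) → EuclideanSpace ℝ (Fin (n+1)),
    ContDiff ℝ 1 T → HasCompactSupport T →
    ∫ x in E, vdiv T x = ∫ x in RB, ⟪T x, ν x⟫ ∂μH[(n : ℝ)]

/-- Anisotropic relative perimeter P_Φ(E, U) = ∫_{U ∩ ∂*E} Φ(ν_E) dH^{n-1}. -/
def anisoPerimeter {n : ℕ} (Φ : EuclideanSpace ℝ (Fin (n+1)) → ℝ)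
    (U RB : Set (EuclideanSpace ℝ (Fin (n+1))))
    (ν : EuclideanSpace ℝ (Fin (n+1)) → EuclideanSpace ℝ (Fin (n+1))) : ℝ :=
  ∫ x in U ∩ RB, Φ (ν x) ∂μH[(n : ℝ)]

/-- The capillary functional 𝒞_{Φ,β}(E) = P_Φ(E,Ω) − β ℋ^{n-1}(∂Ω ∩ ∂*E). -/
def capillary {n : ℕ} (Φ : EuclideanSpace ℝ (Fin (n+1)) → ℝ) (β : ℝ)
    (RB : Set (EuclideanSpace ℝ (Fin (n+1))))
    (ν : EuclideanSpace ℝ (Fin (n+1)) → EuclideanSpace ℝ (Fin (n+1))) : ℝ :=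
  anisoPerimeter Φ (upperHalf n) RB ν - β * (μH[(n : ℝ)] (halfBoundary n ∩ RB)).toReal


section AuxLemmas

variable {n : ℕ}

lemma posHomOne_zero {f : EuclideanSpace ℝ (Fin (n+1)) → ℝ} (h : PosHomOne f) :
    f 0 = 0 := by
  have := h 0 le_rfl 0
  simp at this; exact this

/-- Key characterization of the dual anisotropy level set at 1. -/
lemma dual_eq_one_iff (f : EuclideanSpace ℝ (Fin (n+1)) → ℝ) (c : ℝ) (hc : 0 < c)
    (hlb : ∀ y, c * ‖y‖ ≤ f y) (hcont : Continuous f) (hhom : PosHomOne f)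
    (x : EuclideanSpace ℝ (Fin (n+1))) :
    dualAniso f x = 1 ↔
      (∀ y, ⟪x, y⟫ ≤ f y) ∧ ∃ y, f y = 1 ∧ ⟪x, y⟫ = 1 := by
  have hf0 : f 0 = 0 := posHomOne_zero hhom
  have hfpos : ∀ y : EuclideanSpace ℝ (Fin (n+1)), y ≠ 0 → 0 < f y := fun y hy =>
    (mul_pos hc (norm_pos_iff.mpr hy)).trans_le (hlb y)
  have hscale : ∀ y : EuclideanSpace ℝ (Fin (n+1)), y ≠ 0 → f ((f y)⁻¹ • y) = 1 := by
    intro y hy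
    rw [hhom _ (inv_nonneg.mpr (hfpos y hy).le)]
    field_simp [(hfpos y hy).ne']
  set S := {r : ℝ | ∃ y, f y = 1 ∧ r = ⟪x, y⟫} with hS
  have hSim : S = (fun y => (⟪x, y⟫ : ℝ)) '' {y : EuclideanSpace ℝ (Fin (n+1)) | f y = 1} := by
    ext r
    constructor
    · rintro ⟨y, hy, rfl⟩; exact ⟨y, hy, rfl⟩
    · rintro ⟨y, hy, rfl⟩; exact ⟨y, hy, rfl⟩
  have hcompact : IsCompact {y : EuclideanSpace ℝ (Fin (n+1)) | f y = 1} := by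
    apply Metric.isCompact_of_isClosed_isBounded
    · exact isClosed_eq hcont continuous_const
    · rw [Metric.isBounded_iff_subset_closedBall 0]
      refine ⟨c⁻¹, fun y hy => ?_⟩
      simp only [Metric.mem_closedBall, dist_zero_right]
      have h1 := hlb y
      rw [Set.mem_setOf_eq] at hy
      rw [hy] at h1
      have h3 : c * ‖y‖ ≤ c * c⁻¹ := by rw [mul_inv_cancel₀ hc.ne']; exact h1
      exact le_of_mul_le_mul_left h3 hc
  have hne : ({y : EuclideanSpace ℝ (Fin (n+1)) | f y = 1}).Nonempty := by
    have h0 : (EuclideanSpace.single (0 : Fin (n+1)) (1:ℝ)) ≠ 0 := by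
      intro h
      have := congrArg (fun v : EuclideanSpace ℝ (Fin (n+1)) => v 0) h
      simpa using this
    exact ⟨(f _)⁻¹ • _, hscale _ h0⟩
  have hScompact : IsCompact S := by
    rw [hSim]
    exact hcompact.image (continuous_const.inner continuous_id)
  have hSne : S.Nonempty := by
    obtain ⟨y, hy⟩ := hne
    exact ⟨⟪x, y⟫, y, hy, rfl⟩
  have hSbdd : BddAbove S := hScompact.bddAbove
  have hmem : sSup S ∈ S := hScompact.sSup_mem hSne
  rw [dualAniso]
  constructor
  · intro h1
    rw [hS] at hmem
    refine ⟨?_, ?_⟩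
    · intro y
      rcases eq_or_ne y 0 with rfl | hy
      · simp [hf0]
      · have hm : (⟪x, (f y)⁻¹ • y⟫ : ℝ) ∈ S := ⟨_, hscale y hy, rfl⟩
        have := (le_csSup hSbdd hm).trans_eq h1
        rw [real_inner_smul_right] at this
        have hfy := hfpos y hy
        calc (⟪x, y⟫ : ℝ) = f y * ((f y)⁻¹ * ⟪x, y⟫) := by field_simp
        _ ≤ f y * 1 := by nlinarith
        _ = f y := mul_one _
    · rw [h1] at hmem
      obtain ⟨y, hy, hxy⟩ := hmem
      exact ⟨y, hy, hxy.symm⟩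
  · rintro ⟨hub, y, hy, hxy⟩
    apply le_antisymm
    · apply csSup_le hSne
      rintro r ⟨z, hz, rfl⟩
      have := hub z
      rw [hz] at this
      exact this
    · exact le_csSup hSbdd ⟨y, hy, hxy.symm⟩

lemma aniso_continuous {Φ : EuclideanSpace ℝ (Fin (n+1)) → ℝ} {c C : ℝ}
    (hΦ : IsAnisotropy Φ c C) : Continuous Φ := by
  obtain ⟨hc, hcC, hconv, hhom, hbd⟩ := hΦ
  have hf0 : Φ 0 = 0 := posHomOne_zero hhom
  have hsub : ∀ u v, Φ (u + v) ≤ Φ u + Φ v := by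
    intro u v
    have h2 := hconv.2 (Set.mem_univ u) (Set.mem_univ v)
      (by norm_num : (0:ℝ) ≤ 1/2) (by norm_num : (0:ℝ) ≤ 1/2) (by norm_num)
    have h3 : (1/2 : ℝ) • u + (1/2 : ℝ) • v = (1/2 : ℝ) • (u + v) := by
      rw [smul_add]
    rw [h3, hhom _ (by norm_num : (0:ℝ) ≤ 1/2)] at h2
    simp only [smul_eq_mul] at h2
    linarith
  have hC : 0 < C := lt_of_lt_of_le hc hcC
  have hlip : LipschitzWith C.toNNReal Φ := by
    apply LipschitzWith.of_dist_le_mul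
    intro u v
    rw [Real.dist_eq, Real.coe_toNNReal _ hC.le, dist_eq_norm]
    rw [abs_sub_le_iff]
    constructor
    · have h1 := hsub (u - v) v
      rw [sub_add_cancel] at h1
      have h2 := (hbd (u - v)).2
      linarith
    · have h1 := hsub (v - u) u
      rw [sub_add_cancel] at h1
      have h2 := (hbd (v - u)).2
      rw [norm_sub_rev] at h2
      linarith
  exact hlip.continuous

end AuxLemmas

/-- Ψ_β°(x) = 1 ↔ Φ°(x + βη⁺/Φ(eₙ)) = 1. -/
theorem dual_unit_iff {n : ℕ} (Φ : EuclideanSpace ℝ (Fin (n+1)) → ℝ) (c C : ℝ)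
    (hΦ : IsAnisotropy Φ c C) (η : EuclideanSpace ℝ (Fin (n+1)))
    (hη₁ : ⟪η, eLast n⟫ = Φ (eLast n)) (hη₂ : dualAniso Φ η = 1)
    (β : ℝ) (hβ₀ : 0 ≤ β) (hβ₁ : β < Φ (eLast n)) :
    ∀ x, dualAniso (fun y => Φ y - β * ⟪y, (Φ (eLast n))⁻¹ • η⟫) x = 1 ↔
      dualAniso Φ (x + (β / Φ (eLast n)) • η) = 1 := by
  obtain ⟨hc, hcC, hconv, hhom, hbd⟩ := hΦ
  have hcont : Continuous Φ := aniso_continuous ⟨hc, hcC, hconv, hhom, hbd⟩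
  have hΦ0 : Φ 0 = 0 := posHomOne_zero hhom
  have he_norm : ‖eLast n‖ = 1 := by
    rw [eLast, EuclideanSpace.norm_single]
    norm_num
  have hΦe : 0 < Φ (eLast n) := by
    have := (hbd (eLast n)).1
    rw [he_norm, mul_one] at this
    linarith
  set a := β / Φ (eLast n) with ha
  have ha0 : 0 ≤ a := div_nonneg hβ₀ hΦe.le
  have ha1 : a < 1 := (div_lt_one hΦe).mpr hβ₁
  -- η is bounded by Φ
  have hηb : ∀ y, (⟪η, y⟫ : ℝ) ≤ Φ y := by
    intro y
    rcases eq_or_ne y 0 with rfl | hy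
    · simp [hΦ0]
    · have hfy : 0 < Φ y := (mul_pos hc (norm_pos_iff.mpr hy)).trans_le (hbd y).1
      have hsc : Φ ((Φ y)⁻¹ • y) = 1 := by
        rw [hhom _ (inv_nonneg.mpr hfy.le)]
        field_simp
      have hmem : (⟪η, (Φ y)⁻¹ • y⟫ : ℝ) ∈ {r : ℝ | ∃ z, Φ z = 1 ∧ r = ⟪η, z⟫} :=
        ⟨_, hsc, rfl⟩
      have hbdd : BddAbove {r : ℝ | ∃ z, Φ z = 1 ∧ r = ⟪η, z⟫} := by
        refine ⟨‖η‖ * c⁻¹, ?_⟩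
        rintro r ⟨z, hz, rfl⟩
        have h1 := (hbd z).1
        rw [hz] at h1
        have h2 : ‖z‖ ≤ c⁻¹ := by
          have h3 : c * ‖z‖ ≤ c * c⁻¹ := by rw [mul_inv_cancel₀ hc.ne']; exact h1
          exact le_of_mul_le_mul_left h3 hc
        calc (⟪η, z⟫ : ℝ) ≤ ‖η‖ * ‖z‖ := real_inner_le_norm η z
        _ ≤ ‖η‖ * c⁻¹ := by nlinarith [norm_nonneg η]
      have hle : (⟪η, (Φ y)⁻¹ • y⟫ : ℝ) ≤ 1 := by
        have := le_csSup hbdd hmem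
        rw [← dualAniso, hη₂] at this
        exact this
      rw [real_inner_smul_right] at hle
      calc (⟪η, y⟫ : ℝ) = Φ y * ((Φ y)⁻¹ * ⟪η, y⟫) := by field_simp
      _ ≤ Φ y * 1 := by nlinarith
      _ = Φ y := mul_one _
  set Ψ : EuclideanSpace ℝ (Fin (n+1)) → ℝ :=
    fun y => Φ y - β * ⟪y, (Φ (eLast n))⁻¹ • η⟫ with hΨ
  have hΨeq : ∀ y, Ψ y = Φ y - a * ⟪η, y⟫ := by
    intro y
    rw [hΨ]
    simp only [real_inner_smul_right, real_inner_comm y η, ha, div_eq_mul_inv]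
    ring
  have hΨhom : PosHomOne Ψ := by
    intro t ht y
    simp only [hΨeq, hhom t ht, real_inner_smul_right]
    ring
  have hΨlb : ∀ y, ((1 - a) * c) * ‖y‖ ≤ Ψ y := by
    intro y
    rw [hΨeq]
    have h1 := hηb y
    have h2 := (hbd y).1
    nlinarith [norm_nonneg y]
  have hΨc : 0 < (1 - a) * c := mul_pos (by linarith) hc
  have hΨcont : Continuous Ψ := by
    apply hcont.sub
    exact continuous_const.mul (continuous_id.inner continuous_const)
  intro x
  rw [dual_eq_one_iff Ψ _ hΨc hΨlb hΨcont hΨhom,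
      dual_eq_one_iff Φ c hc (fun y => (hbd y).1) hcont hhom]
  have hinner : ∀ y, (⟪x + a • η, y⟫ : ℝ) = ⟪x, y⟫ + a * ⟪η, y⟫ := by
    intro y
    rw [inner_add_left, real_inner_smul_left]
  constructor
  · rintro ⟨hub, y, hy, hxy⟩
    constructor
    · intro z
      have h1 := hub z
      rw [hΨeq] at h1
      rw [hinner]
      linarith
    · -- y : Ψ y = 1, ⟪x,y⟫ = 1 ; rescale by Φ y
      have hy0 : y ≠ 0 := by
        intro h
        rw [h] at hy
        rw [hΨeq] at hy
        simp [hΦ0] at hy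
      have hfy : 0 < Φ y := (mul_pos hc (norm_pos_iff.mpr hy0)).trans_le (hbd y).1
      refine ⟨(Φ y)⁻¹ • y, ?_, ?_⟩
      · rw [hhom _ (inv_nonneg.mpr hfy.le)]; field_simp
      · rw [hinner, real_inner_smul_right, real_inner_smul_right]
        have hΨy := hΨeq y
        rw [hy] at hΨy
        have h5 : (⟪x, y⟫ : ℝ) + a * ⟪η, y⟫ = Φ y := by rw [hxy]; linarith
        have h6 : (Φ y)⁻¹ * ⟪x, y⟫ + a * ((Φ y)⁻¹ * ⟪η, y⟫)
            = (Φ y)⁻¹ * ((⟪x, y⟫ : ℝ) + a * ⟪η, y⟫) := by ring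
        rw [h6, h5, inv_mul_cancel₀ hfy.ne']
  · rintro ⟨hub, z, hz, hxz⟩
    constructor
    · intro y
      have h1 := hub y
      rw [hinner] at h1
      rw [hΨeq]
      linarith
    · have hz0 : z ≠ 0 := by
        intro h
        rw [h, hΦ0] at hz
        norm_num at hz
      have hΨz : 0 < Ψ z := (mul_pos hΨc (norm_pos_iff.mpr hz0)).trans_le (hΨlb z)
      refine ⟨(Ψ z)⁻¹ • z, ?_, ?_⟩
      · rw [hΨhom _ (inv_nonneg.mpr hΨz.le)]; field_simp
      · rw [real_inner_smul_right]
        rw [hinner] at hxz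
        have hΨzeq := hΨeq z
        rw [hz] at hΨzeq
        have hxzv : (⟪x, z⟫ : ℝ) = Ψ z := by linarith
        rw [hxzv]
        field_simp
end
end

section
/- Let Φ be an anisotropy on ℝⁿ, η⁺ ∈ ∂Φ(eₙ), 0 ≤ β < Φ(eₙ), and Ψ_β(x) = Φ(x) − β⟨x, η⁺/Φ(eₙ)⟩. Then the Wulff shape of Ψ_β is the translated Wulff shape of Φ: W^{Ψ_β} := {x : Ψ_β°(x) ≤ 1} = −β·η⁺/Φ(eₙ) + {x : Φ°(x) ≤ 1}. -/
open MeasureTheory Set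
open scoped RealInnerProductSpace ENNReal NNReal Pointwise

noncomputable section

theorem dualAniso_le_one_iff {n : ℕ} (F : EuclideanSpace ℝ (Fin (n+1)) → ℝ) (c : ℝ)
    (hc : 0 < c) (hhom : PosHomOne F) (hlow : ∀ y, c * ‖y‖ ≤ F y)
    (x : EuclideanSpace ℝ (Fin (n+1))) :
    dualAniso F x ≤ 1 ↔ ∀ y, ⟪x, y⟫ ≤ F y := by
  constructor
  · intro h y
    rcases eq_or_ne y 0 with rfl | hy
    · simpa using (by simpa using hlow 0 : (0:ℝ) ≤ F 0)
    · have hFy : 0 < F y := lt_of_lt_of_le (mul_pos hc (norm_pos_iff.mpr hy)) (hlow y)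
      have hmem : ⟪x, (F y)⁻¹ • y⟫ ∈ {r : ℝ | ∃ z, F z = 1 ∧ r = ⟪x, z⟫} :=
        ⟨(F y)⁻¹ • y, by rw [hhom _ (by positivity) y]; field_simp, rfl⟩
      have hbdd : BddAbove {r : ℝ | ∃ z, F z = 1 ∧ r = ⟪x, z⟫} := by
        refine ⟨‖x‖ * c⁻¹, ?_⟩
        rintro r ⟨z, hz, rfl⟩
        have hz1 : ‖z‖ ≤ c⁻¹ := by
          rw [← mul_le_mul_iff_right₀ hc, mul_inv_cancel₀ hc.ne']
          linarith [hlow z, hz.le]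
        calc ⟪x, z⟫ ≤ ‖x‖ * ‖z‖ := real_inner_le_norm x z
          _ ≤ ‖x‖ * c⁻¹ := by gcongr
      have := (le_csSup hbdd hmem).trans h
      rw [real_inner_smul_right] at this
      calc ⟪x, y⟫ = F y * ((F y)⁻¹ * ⟪x, y⟫) := by field_simp
        _ ≤ F y * 1 := by gcongr
        _ = F y := mul_one _
  · intro h
    apply Real.sSup_le _ zero_le_one
    rintro r ⟨z, hz, rfl⟩
    simpa [hz] using h z

/-- the Wulff shape of Ψ_β is the translated Wulff shape of Φ. -/
theorem wulff_translate {n : ℕ} (Φ : EuclideanSpace ℝ (Fin (n+1)) → ℝ) (c C : ℝ)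
    (hΦ : IsAnisotropy Φ c C) (η : EuclideanSpace ℝ (Fin (n+1)))
    (hη₁ : ⟪η, eLast n⟫ = Φ (eLast n)) (hη₂ : dualAniso Φ η = 1)
    (β : ℝ) (hβ₀ : 0 ≤ β) (hβ₁ : β < Φ (eLast n)) :
    {x | dualAniso (fun y => Φ y - β * ⟪y, (Φ (eLast n))⁻¹ • η⟫) x ≤ 1} =
      (-((β / Φ (eLast n)) • η)) +ᵥ {x | dualAniso Φ x ≤ 1} := by
  obtain ⟨hc, hcC, hconv, hhom, hbnd⟩ := hΦ
  have hnorm : ‖eLast n‖ = 1 := by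
    simp [eLast, EuclideanSpace.norm_single]
  have hΦe : 0 < Φ (eLast n) := by
    have := (hbnd (eLast n)).1
    rw [hnorm] at this; linarith
  have hη : ∀ y, ⟪η, y⟫ ≤ Φ y :=
    (dualAniso_le_one_iff Φ c hc hhom (fun y => (hbnd y).1) η).1 hη₂.le
  set v : EuclideanSpace ℝ (Fin (n+1)) := (β / Φ (eLast n)) • η with hv
  set Ψ : EuclideanSpace ℝ (Fin (n+1)) → ℝ :=
    fun y => Φ y - β * ⟪y, (Φ (eLast n))⁻¹ • η⟫ with hΨ
  have hΨv : ∀ y, Ψ y = Φ y - ⟪v, y⟫ := by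
    intro y
    simp only [hΨ, hv, real_inner_smul_right, real_inner_smul_left, real_inner_comm y η]
    ring
  have hΨhom : PosHomOne Ψ := by
    intro t ht y
    simp only [hΨv, real_inner_smul_right, hhom t ht y]
    ring
  have hfrac : β / Φ (eLast n) < 1 := (div_lt_one hΦe).2 hβ₁
  have hfrac0 : 0 ≤ β / Φ (eLast n) := by positivity
  have hΨlow : ∀ y, (c * (1 - β / Φ (eLast n))) * ‖y‖ ≤ Ψ y := by
    intro y
    have h1 : ⟪v, y⟫ ≤ (β / Φ (eLast n)) * Φ y := by
      rw [hv, real_inner_smul_left]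
      exact mul_le_mul_of_nonneg_left (hη y) hfrac0
    have h2 : c * ‖y‖ ≤ Φ y := (hbnd y).1
    have h3 : (0:ℝ) ≤ ‖y‖ := norm_nonneg y
    rw [hΨv]
    nlinarith
  have hc' : 0 < c * (1 - β / Φ (eLast n)) := by
    have : 0 < 1 - β / Φ (eLast n) := by linarith
    positivity
  ext x
  simp only [Set.mem_setOf_eq, Set.mem_vadd_set_iff_neg_vadd_mem, neg_neg,
    vadd_eq_add]
  rw [dualAniso_le_one_iff Ψ _ hc' hΨhom hΨlow x,
    dualAniso_le_one_iff Φ c hc hhom (fun y => (hbnd y).1)]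
  constructor
  · intro h y
    have := h y
    rw [hΨv] at this
    rw [inner_add_left]
    linarith
  · intro h y
    have := h y
    rw [inner_add_left] at this
    rw [hΨv]
    linarith
end
end
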